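/- Let n ≥ 1 and let f : ℝ → (complex n×n matrices) be differentiable at λ with derivative f'(λ). Then the scalar function t ↦ trace(exp(f(t))) is differentiable at λ with derivative trace(exp(f(λ))·f'(λ)). -/

import Mathlib

open Matrix
open scoped Nat

attribute [local instance] Matrix.linftyOpNormedRing Matrix.linftyOpNormedAlgebra

section Aux

variable {n : ℕ}

@[reducible] noncomputable def matTop : TopologicalSpace (Matrix (Fin n) (Fin n) ℂ) :=
  PseudoMetricSpace.toUniformSpace.toTopologicalSpace

attribute [local instance] matTop

/-- The trace as a continuous linear map. -/
noncomputable def traceCLM (n : ℕ) : Matrix (Fin n) (Fin n) ℂ →L[ℂ] ℂ :=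
  LinearMap.toContinuousLinearMap (Matrix.traceLinearMap (Fin n) ℂ ℂ)

@[simp] lemma traceCLM_apply (X : Matrix (Fin n) (Fin n) ℂ) :
    traceCLM n X = Matrix.trace X := rfl

/-- Fréchet derivative of `X ↦ X ^ k` in a matrix algebra. -/
lemma hasFDerivAt_pow_mat (k : ℕ) (A : Matrix (Fin n) (Fin n) ℂ) :
    HasFDerivAt (fun X : Matrix (Fin n) (Fin n) ℂ => X ^ k)
      (∑ i ∈ Finset.range k,
        ContinuousLinearMap.mulLeftRight ℂ _ (A ^ i) (A ^ (k - 1 - i))) A := by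
  induction k with
  | zero => simpa using hasFDerivAt_const (1 : Matrix (Fin n) (Fin n) ℂ) A
  | succ k ih =>
    have h2 := ih.mul' (hasFDerivAt_id A)
    have heq : (fun X : Matrix (Fin n) (Fin n) ℂ => X ^ (k + 1)) =
        fun X : Matrix (Fin n) (Fin n) ℂ => X ^ k * X := by
      funext X; rw [pow_succ]
    rw [heq]
    convert h2 using 1
    · rfl
    · rfl
    · rfl
    refine ContinuousLinearMap.ext fun H => ?_
    simp only [ContinuousLinearMap.coe_sum', Finset.sum_apply,
      ContinuousLinearMap.mulLeftRight_apply, ContinuousLinearMap.add_apply,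
      ContinuousLinearMap.smul_apply, ContinuousLinearMap.coe_id', id_eq,
      ContinuousLinearMap.smulRight_apply, smul_eq_mul, Finset.sum_range_succ,
      Nat.add_sub_cancel, Nat.sub_self, pow_zero, mul_one, op_smul_eq_mul]
    rw [Finset.sum_mul, add_comm]
    congr 1
    refine Finset.sum_congr rfl fun i hi => ?_
    have hik : k - i = (k - 1 - i) + 1 := by
      have := Finset.mem_range.mp hi; omega
    rw [hik, pow_succ, ← mul_assoc]

/-- Fréchet derivative of `X ↦ trace (X ^ k)`. -/
lemma hasFDerivAt_trace_pow (k : ℕ) (A : Matrix (Fin n) (Fin n) ℂ) :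
    HasFDerivAt (fun X : Matrix (Fin n) (Fin n) ℂ => Matrix.trace (X ^ k))
      ((k : ℂ) • ((traceCLM n).comp
        (ContinuousLinearMap.mul ℂ _ (A ^ (k - 1))))) A := by
  have h := (traceCLM n).hasFDerivAt.comp A (hasFDerivAt_pow_mat k A)
  convert h using 1
  · rfl
  · rfl
  · rfl
  · rfl
  ext H
  simp only [ContinuousLinearMap.smul_apply, ContinuousLinearMap.coe_comp',
    Function.comp_apply, ContinuousLinearMap.mul_apply', traceCLM_apply,
    ContinuousLinearMap.coe_sum', Finset.sum_apply,
    ContinuousLinearMap.mulLeftRight_apply, smul_eq_mul]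
  rw [Matrix.trace_sum]
  have hterm : ∀ i ∈ Finset.range k,
      Matrix.trace (A ^ i * H * A ^ (k - 1 - i)) = Matrix.trace (A ^ (k - 1) * H) := by
    intro i hi
    have hik : k - 1 - i + i = k - 1 := by
      have := Finset.mem_range.mp hi; omega
    rw [Matrix.trace_mul_cycle, ← pow_add, hik]
  rw [Finset.sum_congr rfl hterm, Finset.sum_const, Finset.card_range, nsmul_eq_mul]

set_option maxHeartbeats 1600000 in
set_option synthInstance.maxHeartbeats 1000000 in
lemma hasFDerivAt_trace_exp_aux (hn : 1 ≤ n) (A : Matrix (Fin n) (Fin n) ℂ) :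
    HasFDerivAt (fun X : Matrix (Fin n) (Fin n) ℂ => Matrix.trace (NormedSpace.exp X))
      ((traceCLM n).comp
        (ContinuousLinearMap.mul ℂ _ (NormedSpace.exp A))) A := by
  haveI : Nonempty (Fin n) := ⟨⟨0, hn⟩⟩
  haveI hone : NormOneClass (Matrix (Fin n) (Fin n) ℂ) :=
    ⟨by
      rw [← Matrix.diagonal_one]
      exact (Matrix.linfty_opNorm_diagonal _).trans norm_one⟩
  set C : ℝ := ‖traceCLM n‖ with hC
  set R : ℝ := ‖A‖ + 1 with hR
  have hR0 : 0 ≤ R := by positivity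
  -- the summands and their derivatives
  set F : ℕ → Matrix (Fin n) (Fin n) ℂ → ℂ :=
    fun k X => ((k ! : ℂ))⁻¹ • Matrix.trace (X ^ k) with hF
  set F' : ℕ → Matrix (Fin n) (Fin n) ℂ → (Matrix (Fin n) (Fin n) ℂ →L[ℂ] ℂ) := fun k X =>
    ((k ! : ℂ))⁻¹ • ((k : ℂ) • ((traceCLM n).comp
      (ContinuousLinearMap.mul ℂ (Matrix (Fin n) (Fin n) ℂ) (X ^ (k - 1))))) with hF'
  set u : ℕ → ℝ := fun k => match k with
    | 0 => 0
    | (k + 1) => C * (R ^ k / k !) with hu_def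
  have hu : Summable u := by
    have h1 : Summable fun k => u (k + 1) :=
      ((Real.summable_pow_div_factorial R).mul_left C).congr fun k => rfl
    exact (summable_nat_add_iff 1).mp h1
  set s : Set (Matrix (Fin n) (Fin n) ℂ) :=
    Metric.ball (0 : Matrix (Fin n) (Fin n) ℂ) R with hs_def
  have hs : IsOpen s := Metric.isOpen_ball
  have h's : IsPreconnected s := (convex_ball (0 : Matrix (Fin n) (Fin n) ℂ) R).isPreconnected
  have hA : A ∈ s := by
    simp only [hs_def, Metric.mem_ball, dist_zero_right, hR]
    linarith
  have hdiff : ∀ k (X : Matrix (Fin n) (Fin n) ℂ), X ∈ s →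
      HasFDerivAt (F k) (F' k X) X := fun k X _ =>
    (hasFDerivAt_trace_pow k X).const_smul ((k ! : ℂ))⁻¹
  have hF'0 : ∀ X : Matrix (Fin n) (Fin n) ℂ, F' 0 X = 0 := by
    intro X
    have h1 : (0 : ℂ) • ((traceCLM n).comp
        (ContinuousLinearMap.mul ℂ (Matrix (Fin n) (Fin n) ℂ) (X ^ (0 - 1)))) = 0 :=
      zero_smul ℂ ((traceCLM n).comp
        (ContinuousLinearMap.mul ℂ (Matrix (Fin n) (Fin n) ℂ) (X ^ (0 - 1))))
    calc F' 0 X = ((0 ! : ℂ))⁻¹ • (((0 : ℕ) : ℂ) • ((traceCLM n).comp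
          (ContinuousLinearMap.mul ℂ (Matrix (Fin n) (Fin n) ℂ) (X ^ (0 - 1))))) := rfl
      _ = ((0 ! : ℂ))⁻¹ • (0 : Matrix (Fin n) (Fin n) ℂ →L[ℂ] ℂ) := by
          rw [Nat.cast_zero, h1]
      _ = 0 := @smul_zero ℂ (Matrix (Fin n) (Fin n) ℂ →L[ℂ] ℂ) _ _ (((0 ! : ℂ))⁻¹)
  have hbound : ∀ k (X : Matrix (Fin n) (Fin n) ℂ), X ∈ s → ‖F' k X‖ ≤ u k := by
    intro k X hX
    have hXR : ‖X‖ ≤ R := by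
      have : ‖X‖ < R := by simpa [hs_def, dist_zero_right] using hX
      linarith
    match k with
    | 0 =>
      rw [hF'0 X]
      simp only [norm_zero]
      exact le_of_eq rfl
    | (k + 1) =>
      have hL : ‖(traceCLM n).comp
          (ContinuousLinearMap.mul ℂ (Matrix (Fin n) (Fin n) ℂ) (X ^ k))‖ ≤ C * R ^ k := by
        calc ‖(traceCLM n).comp (ContinuousLinearMap.mul ℂ (Matrix (Fin n) (Fin n) ℂ) (X ^ k))‖
            ≤ ‖traceCLM n‖ * ‖ContinuousLinearMap.mul ℂ (Matrix (Fin n) (Fin n) ℂ) (X ^ k)‖ :=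
              ContinuousLinearMap.opNorm_comp_le _ _
          _ ≤ C * ‖X ^ k‖ := by
              rw [← hC]
              exact mul_le_mul_of_nonneg_left
                (ContinuousLinearMap.opNorm_mul_apply_le _ _ _) (norm_nonneg _)
          _ ≤ C * R ^ k := by
              have h1 : ‖X ^ k‖ ≤ ‖X‖ ^ k := norm_pow_le _ _
              have h2 : ‖X‖ ^ k ≤ R ^ k := pow_le_pow_left₀ (norm_nonneg _) hXR k
              have hC0 : 0 ≤ C := norm_nonneg _
              nlinarith
      have hkfac : (0 : ℝ) < (k ! : ℝ) := by positivity
      have hk0 : ((k + 1 : ℕ) : ℝ) ≠ 0 := by positivity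
      have hfac : (((k + 1) ! : ℝ)) = ((k + 1 : ℕ) : ℝ) * (k ! : ℝ) := by
        exact_mod_cast congrArg (fun m : ℕ => (m : ℝ)) (Nat.factorial_succ k)
      calc ‖F' (k + 1) X‖
          = ‖(((k + 1) ! : ℂ))⁻¹ • (((k + 1 : ℕ) : ℂ) • ((traceCLM n).comp
              (ContinuousLinearMap.mul ℂ (Matrix (Fin n) (Fin n) ℂ) (X ^ k))))‖ := rfl
        _ = ‖(((k + 1) ! : ℂ))⁻¹‖ * ‖((k + 1 : ℕ) : ℂ) • ((traceCLM n).comp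
              (ContinuousLinearMap.mul ℂ (Matrix (Fin n) (Fin n) ℂ) (X ^ k)))‖ :=
            norm_smul ((((k + 1) ! : ℂ))⁻¹) (((k + 1 : ℕ) : ℂ) • ((traceCLM n).comp
              (ContinuousLinearMap.mul ℂ (Matrix (Fin n) (Fin n) ℂ) (X ^ k))))
        _ = ‖(((k + 1) ! : ℂ))⁻¹‖ * (‖((k + 1 : ℕ) : ℂ)‖ * ‖(traceCLM n).comp
              (ContinuousLinearMap.mul ℂ (Matrix (Fin n) (Fin n) ℂ) (X ^ k))‖) := by
            have h3 : ‖((k + 1 : ℕ) : ℂ) • ((traceCLM n).comp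
                (ContinuousLinearMap.mul ℂ (Matrix (Fin n) (Fin n) ℂ) (X ^ k)))‖ =
                ‖((k + 1 : ℕ) : ℂ)‖ * ‖(traceCLM n).comp
                (ContinuousLinearMap.mul ℂ (Matrix (Fin n) (Fin n) ℂ) (X ^ k))‖ :=
              norm_smul (((k + 1 : ℕ) : ℂ)) ((traceCLM n).comp
                (ContinuousLinearMap.mul ℂ (Matrix (Fin n) (Fin n) ℂ) (X ^ k)))
            rw [h3]
        _ = (((k + 1) ! : ℝ))⁻¹ * (((k + 1 : ℕ) : ℝ) * ‖(traceCLM n).comp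
              (ContinuousLinearMap.mul ℂ (Matrix (Fin n) (Fin n) ℂ) (X ^ k))‖) := by
            rw [norm_inv, Complex.norm_natCast, Complex.norm_natCast]
        _ = ((k ! : ℝ))⁻¹ * ‖(traceCLM n).comp
              (ContinuousLinearMap.mul ℂ (Matrix (Fin n) (Fin n) ℂ) (X ^ k))‖ := by
            rw [hfac, mul_inv]
            field_simp
        _ ≤ ((k ! : ℝ))⁻¹ * (C * R ^ k) := mul_le_mul_of_nonneg_left hL (by positivity)
        _ = u (k + 1) := by
            simp only [hu_def]
            ring
  have hF0 : Summable fun k => F k A := by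
    have h1 : Summable fun k : ℕ => ((k ! : ℂ))⁻¹ • A ^ k :=
      NormedSpace.expSeries_summable' (𝕂 := ℂ) A
    have h2 := h1.mapL (traceCLM n)
    exact h2.congr fun k => ((traceCLM n).map_smul _ _)
  have hmain :=
    hasFDerivAt_tsum_of_isPreconnected hu hs h's hdiff hbound hA hF0 hA
  -- identify the function
  have hfun : (fun X : Matrix (Fin n) (Fin n) ℂ => Matrix.trace (NormedSpace.exp X)) =
      fun X : Matrix (Fin n) (Fin n) ℂ => ∑' k, F k X := by
    funext X
    have h1 : Summable fun k : ℕ => ((k ! : ℂ))⁻¹ • X ^ k :=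
      NormedSpace.expSeries_summable' (𝕂 := ℂ) X
    rw [NormedSpace.exp_eq_tsum ℂ]
    calc Matrix.trace (∑' k : ℕ, ((k ! : ℂ))⁻¹ • X ^ k)
        = traceCLM n (∑' k : ℕ, ((k ! : ℂ))⁻¹ • X ^ k) := rfl
      _ = ∑' k : ℕ, traceCLM n (((k ! : ℂ))⁻¹ • X ^ k) :=
          (traceCLM n).map_tsum h1
      _ = ∑' k, F k X := tsum_congr fun k => ((traceCLM n).map_smul _ _)
  -- identify the derivative
  have hsum' : Summable fun k => F' k A :=
    Summable.of_norm_bounded hu fun k => hbound k A hA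
  have hder : (∑' k, F' k A) = (traceCLM n).comp
      (ContinuousLinearMap.mul ℂ (Matrix (Fin n) (Fin n) ℂ) (NormedSpace.exp A)) := by
    refine ContinuousLinearMap.ext fun H => ?_
    have happ : (∑' k, F' k A) H = ∑' k, (F' k A) H :=
      ((ContinuousLinearMap.apply ℂ ℂ H).map_tsum hsum')
    rw [happ]
    -- compute the right-hand side as a series
    have h1 : Summable fun k : ℕ => ((k ! : ℂ))⁻¹ • A ^ k :=
      NormedSpace.expSeries_summable' (𝕂 := ℂ) A
    have hRHS : Matrix.trace (NormedSpace.exp A * H) =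
        ∑' k : ℕ, ((k ! : ℂ))⁻¹ • Matrix.trace (A ^ k * H) := by
      have hmt := ((traceCLM n).comp
        ((ContinuousLinearMap.mul ℂ (Matrix (Fin n) (Fin n) ℂ)).flip H)).map_tsum h1
      rw [NormedSpace.exp_eq_tsum ℂ]
      calc Matrix.trace ((∑' k : ℕ, ((k ! : ℂ))⁻¹ • A ^ k) * H)
          = ((traceCLM n).comp ((ContinuousLinearMap.mul ℂ (Matrix (Fin n) (Fin n) ℂ)).flip H))
              (∑' k : ℕ, ((k ! : ℂ))⁻¹ • A ^ k) := rfl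
        _ = ∑' k : ℕ, ((traceCLM n).comp
              ((ContinuousLinearMap.mul ℂ (Matrix (Fin n) (Fin n) ℂ)).flip H))
              (((k ! : ℂ))⁻¹ • A ^ k) := hmt
        _ = ∑' k : ℕ, ((k ! : ℂ))⁻¹ • Matrix.trace (A ^ k * H) := by
            refine tsum_congr fun k => ?_
            have hsm : (((k ! : ℂ))⁻¹ • A ^ k) * H = ((k ! : ℂ))⁻¹ • (A ^ k * H) :=
              smul_mul_assoc _ _ _
            calc ((traceCLM n).comp
                  ((ContinuousLinearMap.mul ℂ (Matrix (Fin n) (Fin n) ℂ)).flip H))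
                  (((k ! : ℂ))⁻¹ • A ^ k)
                = Matrix.trace ((((k ! : ℂ))⁻¹ • A ^ k) * H) := rfl
              _ = Matrix.trace (((k ! : ℂ))⁻¹ • (A ^ k * H)) := by rw [hsm]
              _ = ((k ! : ℂ))⁻¹ • Matrix.trace (A ^ k * H) := Matrix.trace_smul _ _
    have hsumH : Summable fun k => (F' k A) H := by
      apply Summable.of_norm_bounded (g := fun k => u k * ‖H‖) (hu.mul_right ‖H‖)
      intro k
      calc ‖(F' k A) H‖ ≤ ‖F' k A‖ * ‖H‖ := (F' k A).le_opNorm H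
        _ ≤ u k * ‖H‖ := mul_le_mul_of_nonneg_right (hbound k A hA) (norm_nonneg H)
    have hzero : (F' 0 A) H = 0 := by rw [hF'0 A]; rfl
    rw [hsumH.tsum_eq_zero_add, hzero, zero_add]
    have hgoal : ((traceCLM n).comp
        (ContinuousLinearMap.mul ℂ (Matrix (Fin n) (Fin n) ℂ) (NormedSpace.exp A))) H =
        Matrix.trace (NormedSpace.exp A * H) := rfl
    rw [hgoal, hRHS]
    refine tsum_congr fun k => ?_
    have hk1 : ((k + 1 : ℕ) : ℂ) ≠ 0 := Nat.cast_ne_zero.mpr (Nat.succ_ne_zero k)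
    have hfacC : (((k + 1) ! : ℂ)) = ((k + 1 : ℕ) : ℂ) * (k ! : ℂ) := by
      exact_mod_cast congrArg (fun m : ℕ => (m : ℂ)) (Nat.factorial_succ k)
    have hkfacC : ((k ! : ℂ)) ≠ 0 := Nat.cast_ne_zero.mpr (Nat.factorial_ne_zero k)
    have hcoef : (((k + 1) ! : ℂ))⁻¹ * ((k + 1 : ℕ) : ℂ) = ((k ! : ℂ))⁻¹ := by
      rw [hfacC]
      field_simp
    calc (F' (k + 1) A) H
        = (((k + 1) ! : ℂ))⁻¹ • (((k + 1 : ℕ) : ℂ) • Matrix.trace (A ^ k * H)) := rfl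
      _ = (((k + 1) ! : ℂ))⁻¹ * (((k + 1 : ℕ) : ℂ) * Matrix.trace (A ^ k * H)) := rfl
      _ = ((((k + 1) ! : ℂ))⁻¹ * ((k + 1 : ℕ) : ℂ)) * Matrix.trace (A ^ k * H) := by ring
      _ = ((k ! : ℂ))⁻¹ * Matrix.trace (A ^ k * H) := by rw [hcoef]
      _ = ((k ! : ℂ))⁻¹ • Matrix.trace (A ^ k * H) := rfl
  rw [hfun, ← hder]
  exact hmain

end Aux

/-- If `f : ℝ → ℂ^{n×n}` is differentiable at `λ` with derivative `f'`, then
`t ↦ tr(exp(f(t)))` is differentiable at `λ` with derivative `tr(exp(f(λ))·f')`. -/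
theorem hasDerivAt_trace_exp
    {n : ℕ} (hn : 1 ≤ n)
    (f : ℝ → Matrix (Fin n) (Fin n) ℂ)
    (f' : Matrix (Fin n) (Fin n) ℂ) (l : ℝ)
    (hf : HasDerivAt f f' l) :
    HasDerivAt (fun t => Matrix.trace (NormedSpace.exp (f t)))
      (Matrix.trace (NormedSpace.exp (f l) * f')) l := by
  have key := hasFDerivAt_trace_exp_aux hn (f l)
  have h := (key.restrictScalars ℝ).comp_hasDerivAt l hf
  exact h
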